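/- Let F be the free group on two generators. Suppose τ is a topology on F making (F, τ) a topological group, and suppose the conjugation map F × F → F, (a,b) ↦ b⁻¹ a b, is continuous when the first factor and the codomain carry the discrete topology and the second factor carries τ. Then τ is the discrete topology. -/

import Mathlib

open Topology

namespace Stmt4Aux

open FreeGroup

private lemma cons_eq_append_singleton {α : Type*} :
    ∀ {l : List α} {x : α}, x :: l = l ++ [x] → l = List.replicate l.length x
  | [], _, _ => rfl
  | y :: t, x, h => by
    simp only [List.cons_append, List.cons.injEq] at h
    obtain ⟨rfl, h⟩ := h
    have := cons_eq_append_singleton h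
    simp [List.replicate_succ, ← this]

private lemma reduce_cons' {α : Type*} [DecidableEq α] {w : List (α × Bool)}
    (hw : reduce w = w) {x : α × Bool} (h : w.head? ≠ some (x.1, !x.2)) :
    reduce (x :: w) = x :: w := by
  rw [reduce.cons, hw]
  cases w with
  | nil => rfl
  | cons hd tl =>
    have : ¬ (x.1 = hd.1 ∧ x.2 = !hd.2) := by
      rintro ⟨h1, h2⟩
      apply h
      simp only [List.head?_cons, Option.some.injEq]
      obtain ⟨a, b⟩ := hd
      simp_all
    simp [this]

private lemma invRev_append_singleton {α : Type*} (w : List (α × Bool)) (x : α × Bool) :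
    invRev (w ++ [x]) = (x.1, !x.2) :: invRev w := by
  simp [invRev]

private lemma head?_invRev {α : Type*} (w : List (α × Bool)) :
    (invRev w).head? = w.getLast?.map (fun p => (p.1, !p.2)) := by
  rw [invRev, List.head?_reverse, List.getLast?_map]

private lemma getLast?_invRev {α : Type*} (w : List (α × Bool)) :
    (invRev w).getLast? = w.head?.map (fun p => (p.1, !p.2)) := by
  rw [invRev, List.getLast?_reverse, List.head?_map]

private lemma reduce_append' {α : Type*} [DecidableEq α] {w : List (α × Bool)}
    (hw : reduce w = w) {x : α × Bool} (h : w.getLast? ≠ some (x.1, !x.2)) :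
    reduce (w ++ [x]) = w ++ [x] := by
  have h1 : reduce (invRev w) = invRev w := by rw [reduce_invRev, hw]
  have h2 : (invRev w).head? ≠ some ((x.1, !x.2).1, !(x.1, !x.2).2) := by
    rw [head?_invRev]
    intro hc
    rw [Option.map_eq_some_iff] at hc
    obtain ⟨⟨a, b⟩, hp, hpe⟩ := hc
    apply h
    simp only [Prod.mk.injEq, Bool.not_not] at hpe
    rw [hp, hpe.1, ← hpe.2, Bool.not_not]
  have := reduce_cons' h1 (x := (x.1, !x.2)) h2
  have h3 : reduce (invRev (w ++ [x])) = invRev (w ++ [x]) := by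
    rw [invRev_append_singleton]; exact this
  rw [reduce_invRev] at h3
  exact invRev_injective h3

private lemma word_eq {g : FreeGroup Bool} {e : Bool} (hc : Commute g (of e)) :
    reduce ((e, true) :: g.toWord) = reduce (g.toWord ++ [(e, true)]) := by
  apply reduce.sound
  have h1 : FreeGroup.mk ((e, true) :: g.toWord) = of e * g :=
    (mul_mk (L₁ := [(e, true)]) (L₂ := g.toWord)).symm.trans (by rw [mk_toWord]; rfl)
  have h2 : FreeGroup.mk (g.toWord ++ [(e, true)]) = g * of e :=
    (mul_mk (L₁ := g.toWord) (L₂ := [(e, true)])).symm.trans (by rw [mk_toWord]; rfl)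
  rw [h1, h2, hc.eq]

private lemma isReplicate {g : FreeGroup Bool} {e : Bool} (hc : Commute g (of e))
    (h1 : g.toWord.head? ≠ some (e, false)) (h2 : g.toWord.getLast? ≠ some (e, false)) :
    g.toWord = List.replicate g.toWord.length (e, true) := by
  have hw : reduce g.toWord = g.toWord := reduce_toWord g
  have hE := word_eq hc
  rw [reduce_cons' hw (by simpa using h1), reduce_append' hw (by simpa using h2)] at hE
  exact cons_eq_append_singleton hE

private lemma eq_one_of_replicate {g : FreeGroup Bool} {e : Bool}
    (hc : ∀ a : Bool, Commute g (of a)) {n : ℕ}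
    (hg : g.toWord = List.replicate n (e, true)) : g = 1 := by
  cases n with
  | zero => exact toWord_eq_nil_iff.mp (by simp [hg])
  | succ m =>
    exfalso
    have hw : reduce g.toWord = g.toWord := reduce_toWord g
    have hE := word_eq (e := !e) (hc (!e))
    have hh : g.toWord.head? = some (e, true) := by simp [hg, List.replicate_succ]
    have hl : g.toWord.getLast? = some (e, true) := by
      rw [hg]
      rw [List.getLast?_eq_getLast (by simp), List.getLast_replicate]
    rw [reduce_cons' hw (by simp [hh]), reduce_append' hw (by simp [hl])] at hE
    have := congrArg List.head? hE
    rw [hg] at this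
    simp [List.replicate_succ] at this

private lemma center_eq_one {g : FreeGroup Bool} (hc : ∀ a : Bool, Commute g (of a)) :
    g = 1 := by
  have finish : ∀ e : Bool, g.toWord.head? ≠ some (e, false) →
      g.toWord.getLast? ≠ some (e, false) → g = 1 := fun e c1 c2 =>
    eq_one_of_replicate hc (isReplicate (hc e) c1 c2)
  rcases hwnil : g.toWord with _ | ⟨⟨a₀, b₀⟩, tl⟩
  · exact toWord_eq_nil_iff.mp hwnil
  have hne : g.toWord ≠ [] := by rw [hwnil]; simp
  have hh : g.toWord.head? = some (a₀, b₀) := by rw [hwnil]; rfl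
  obtain ⟨⟨a₁, b₁⟩, hl⟩ : ∃ p, g.toWord.getLast? = some p :=
    ⟨_, List.getLast?_eq_getLast hne⟩
  clear hwnil
  cases b₀ with
  | true =>
    cases b₁ with
    | true => exact finish true (by simp [hh]) (by simp [hl])
    | false => exact finish (!a₁) (by simp [hh]) (by simp [hl])
  | false =>
    cases b₁ with
    | true => exact finish (!a₀) (by simp [hh]) (by simp [hl])
    | false =>
      by_cases hab : a₀ = a₁
      · subst hab
        exact finish (!a₀) (by simp [hh]) (by simp [hl])
      · have hc' : ∀ a : Bool, Commute g⁻¹ (of a) := fun a => (hc a).inv_left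
        have : g⁻¹ = 1 :=
          eq_one_of_replicate hc'
            (isReplicate (hc' true) (by simp [head?_invRev, hl])
              (by simp [getLast?_invRev, hh]))
        exact inv_eq_one.mp this

end Stmt4Aux

/-- Let `F` be the free group on two generators. If `τ` is a group topology on `F` and the
conjugation map `F × F → F`, `(a, b) ↦ b⁻¹ * a * b`, is continuous when the first factor and
the codomain carry the discrete topology and the second factor carries `τ`, then `τ` is the
discrete topology. -/
theorem stmt4 (τ : TopologicalSpace (FreeGroup Bool))
    (hτ : @IsTopologicalGroup (FreeGroup Bool) τ _)
    (hconj : Continuous[@instTopologicalSpaceProd (FreeGroup Bool) (FreeGroup Bool) ⊥ τ, ⊥]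
      (fun p : FreeGroup Bool × FreeGroup Bool => p.2⁻¹ * p.1 * p.2)) :
    τ = ⊥ := by
  letI := τ
  haveI := hτ
  have key : ∀ a : FreeGroup Bool, IsOpen {b : FreeGroup Bool | b⁻¹ * a * b = a} := by
    intro a
    have h1 : Continuous[τ, @instTopologicalSpaceProd _ _ ⊥ τ]
        (fun b : FreeGroup Bool => ((a, b) : FreeGroup Bool × FreeGroup Bool)) :=
      @Continuous.prodMk _ _ _ ⊥ τ τ _ _ (@continuous_const _ _ τ ⊥ a) continuous_id
    have hmap : Continuous[τ, ⊥]
        ((fun p : FreeGroup Bool × FreeGroup Bool => p.2⁻¹ * p.1 * p.2) ∘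
          (fun b : FreeGroup Bool => ((a, b) : FreeGroup Bool × FreeGroup Bool))) :=
      @Continuous.comp _ _ _ τ (@instTopologicalSpaceProd _ _ ⊥ τ) ⊥ _ _ hconj h1
    exact @Continuous.isOpen_preimage _ _ τ ⊥ _ hmap {a}
      (@isOpen_discrete _ ⊥ (discreteTopology_bot _) {a})
  have hset : {b : FreeGroup Bool | b⁻¹ * FreeGroup.of false * b = FreeGroup.of false} ∩
      {b : FreeGroup Bool | b⁻¹ * FreeGroup.of true * b = FreeGroup.of true} = {1} := by
    ext g
    simp only [Set.mem_inter_iff, Set.mem_setOf_eq, Set.mem_singleton_iff]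
    constructor
    · rintro ⟨hf, ht⟩
      apply Stmt4Aux.center_eq_one
      intro a
      have key : g⁻¹ * FreeGroup.of a * g = FreeGroup.of a := by cases a <;> assumption
      have h2 : g * (g⁻¹ * FreeGroup.of a * g) = g * FreeGroup.of a := by rw [key]
      show g * FreeGroup.of a = FreeGroup.of a * g
      rw [← h2, ← mul_assoc, ← mul_assoc, mul_inv_cancel, one_mul]
    · rintro rfl
      simp
  have hone : IsOpen ({(1 : FreeGroup Bool)} : Set (FreeGroup Bool)) := by
    rw [← hset]
    exact (key (FreeGroup.of false)).inter (key (FreeGroup.of true))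
  haveI : DiscreteTopology (FreeGroup Bool) :=
    discreteTopology_of_isOpen_singleton_one hone
  exact DiscreteTopology.eq_bot
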